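/- Axiom Conf1 is strongly valid in all HMS structures satisfying confinedness: for every formula φ ∈ L^K_n(Φ) (implication-free), the formula (φ = 1/2) ↪ K_i(φ = 1/2) is true at every state. -/
import Mathlib


inductive Form (α : Type) (n : ℕ) : Type
  | top : Form α n
  | prim (p : α) : Form α n
  | neg (φ : Form α n) : Form α n
  | and (φ ψ : Form α n) : Form α n
  | imp (φ ψ : Form α n) : Form α n
  | know (i : Fin n) (φ : Form α n) : Form α n

namespace Form

/-- The set of primitive propositions occurring in a formula. -/
def prims {α : Type} {n : ℕ} : Form α n → Set α
  | top => ∅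
  | prim p => {p}
  | neg φ => prims φ
  | and φ ψ => prims φ ∪ prims ψ
  | imp φ ψ => prims φ ∪ prims ψ
  | know _ φ => prims φ

/-- Formulas of `L^K_n` : no occurrence of the nonstandard implication `↪`. -/
def ImpFree {α : Type} {n : ℕ} : Form α n → Prop
  | top => True
  | prim _ => True
  | neg φ => ImpFree φ
  | and φ ψ => ImpFree φ ∧ ImpFree ψ
  | imp _ _ => False
  | know _ φ => ImpFree φ

end Form

/-- `φ = 1` abbreviates `¬(φ ↪ ¬⊤)`. -/
def eqOne {α : Type} {n : ℕ} (φ : Form α n) : Form α n := .neg (.imp φ (.neg .top))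
/-- `φ = 0` abbreviates `¬(¬φ ↪ ¬⊤)`. -/
def eqZero {α : Type} {n : ℕ} (φ : Form α n) : Form α n := .neg (.imp (.neg φ) (.neg .top))
/-- `φ = 1/2` abbreviates `(φ ↪ ¬⊤) ∧ (¬φ ↪ ¬⊤)`. -/
def eqHalf {α : Type} {n : ℕ} (φ : Form α n) : Form α n :=
  .and (.imp φ (.neg .top)) (.imp (.neg φ) (.neg .top))
/-- `φ ⇌ ψ` abbreviates `(φ ↪ ψ) ∧ (ψ ↪ φ)`. -/
def biimp {α : Type} {n : ℕ} (a b : Form α n) : Form α n := .and (.imp a b) (.imp b a)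
/-- `φ ∨ ψ` abbreviates `¬(¬φ ∧ ¬ψ)`. -/
def orF {α : Type} {n : ℕ} (a b : Form α n) : Form α n := .neg (.and (.neg a) (.neg b))

/-- An HMS structure for `n` agents over the set `α` of primitive propositions.
States are partitioned into spaces `S_Ψ` (recorded by `space`); `pi s p = none`
means `p` is undefined (value 1/2) at `s`; `proj s Ψ` is the projection
`ρ_{space s, Ψ} s`, meaningful when `Ψ ⊆ space s`. -/
structure HMS (α : Type) (n : ℕ) where
  State : Type
  space : State → Set α
  pi : State → α → Option Bool
  pi_def : ∀ s p, (pi s p).isSome ↔ p ∈ space s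
  k : Fin n → State → Set State
  proj : State → Set α → State
  proj_space : ∀ s Ψ, Ψ ⊆ space s → space (proj s Ψ) = Ψ
  proj_pi : ∀ s Ψ p, Ψ ⊆ space s → p ∈ Ψ → pi (proj s Ψ) p = pi s p
  proj_comp : ∀ s Ψ Ψ', Ψ ⊆ Ψ' → Ψ' ⊆ space s → proj (proj s Ψ') Ψ = proj s Ψ
  proj_surj : ∀ (t : State) (Ψ' : Set α), space t ⊆ Ψ' →
    ∃ s, space s = Ψ' ∧ proj s (space t) = t

namespace HMS

/-- 3-valued satisfaction: `(satp M φ s).1` is "φ is true at s",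
`(satp M φ s).2` is "¬φ is true at s" (i.e. φ is false at s). -/
def satp {α : Type} {n : ℕ} (M : HMS α n) : Form α n → M.State → Prop × Prop
  | .top => fun _ => (True, False)
  | .prim p => fun s => (M.pi s p = some true, M.pi s p = some false)
  | .neg φ => fun s => ((satp M φ s).2, (satp M φ s).1)
  | .and φ ψ => fun s =>
      ((satp M φ s).1 ∧ (satp M ψ s).1,
       ((satp M φ s).2 ∧ (satp M ψ s).1) ∨ ((satp M φ s).1 ∧ (satp M ψ s).2) ∨
         ((satp M φ s).2 ∧ (satp M ψ s).2))
  | .imp φ ψ => fun s =>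
      (((satp M φ s).1 ∧ (satp M ψ s).1) ∨ (¬ (satp M φ s).1 ∧ ¬ (satp M φ s).2) ∨
         ((satp M φ s).2 ∧ ((satp M ψ s).1 ∨ (satp M ψ s).2)),
       (satp M φ s).1 ∧ (satp M ψ s).2)
  | .know i φ => fun s =>
      (((satp M φ s).1 ∨ (satp M φ s).2) ∧ ∀ t ∈ M.k i s, (satp M φ t).1,
       ((satp M φ s).1 ∨ (satp M φ s).2) ∧
         ¬ (((satp M φ s).1 ∨ (satp M φ s).2) ∧ ∀ t ∈ M.k i s, (satp M φ t).1))

/-- `(M,s) ⊨ φ`. -/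
def Sat {α : Type} {n : ℕ} (M : HMS α n) (s : M.State) (φ : Form α n) : Prop :=
  (satp M φ s).1
/-- `(M,s) ⊨ ¬φ`. -/
def SatN {α : Type} {n : ℕ} (M : HMS α n) (s : M.State) (φ : Form α n) : Prop :=
  (satp M φ s).2
/-- `φ` is defined (true or false) at `s`. -/
def Defined {α : Type} {n : ℕ} (M : HMS α n) (s : M.State) (φ : Form α n) : Prop :=
  M.Sat s φ ∨ M.SatN s φ

/-- `⟦φ⟧_M`, the set of states where `φ` is true. -/
def truthSet {α : Type} {n : ℕ} (M : HMS α n) (φ : Form α n) : Set M.State :=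
  {s | M.Sat s φ}

/-- Confinedness: if `s ∈ S_Ψ` then `K_i(s) ⊆ S_{Ψ'}` for some `Ψ' ⊆ Ψ`. -/
def Confined {α : Type} {n : ℕ} (M : HMS α n) : Prop :=
  ∀ (i : Fin n) (s : M.State), ∃ Ψ', Ψ' ⊆ M.space s ∧ ∀ t ∈ M.k i s, M.space t = Ψ'

/-- `(K_i(s))^↑`, the states in which (some member of) `K_i(s)` is expressible:
`x ∈ (K_i(s))^↑` iff some `t ∈ K_i(s)` lies in a space `⊆ space x` and `x` projects to `t`. -/
def kUp {α : Type} {n : ℕ} (M : HMS α n) (i : Fin n) (s : M.State) : Set M.State :=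
  {x | ∃ t ∈ M.k i s, M.space t ⊆ M.space x ∧ M.proj x (M.space t) = t}

/-- Generalized reflexivity (`r`): `s ∈ (K_i(s))^↑`. -/
def GenRefl {α : Type} {n : ℕ} (M : HMS α n) : Prop :=
  ∀ (i : Fin n) (s : M.State), s ∈ M.kUp i s
/-- Stationarity, part (a) (`t`): `s' ∈ K_i(s)` implies `K_i(s') ⊆ K_i(s)`. -/
def StatA {α : Type} {n : ℕ} (M : HMS α n) : Prop :=
  ∀ (i : Fin n) (s s' : M.State), s' ∈ M.k i s → M.k i s' ⊆ M.k i s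
/-- Stationarity, part (b) (`e`): `s' ∈ K_i(s)` implies `K_i(s') ⊇ K_i(s)`. -/
def StatB {α : Type} {n : ℕ} (M : HMS α n) : Prop :=
  ∀ (i : Fin n) (s s' : M.State), s' ∈ M.k i s → M.k i s ⊆ M.k i s'
/-- Projections preserve knowledge. -/
def ProjKnow {α : Type} {n : ℕ} (M : HMS α n) : Prop :=
  ∀ (i : Fin n) (s : M.State) (Ψ1 Ψ2 : Set α), Ψ1 ⊆ Ψ2 → Ψ2 ⊆ M.space s →
    (∀ t ∈ M.k i s, M.space t = Ψ2) →
    (fun t => M.proj t Ψ1) '' M.k i s = M.k i (M.proj s Ψ1)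
/-- Projections preserve ignorance. -/
def ProjIgn {α : Type} {n : ℕ} (M : HMS α n) : Prop :=
  ∀ (i : Fin n) (s : M.State) (Ψ : Set α), Ψ ⊆ M.space s →
    M.kUp i s ⊆ M.kUp i (M.proj s Ψ)

end HMS

lemma notboth {α : Type} {n : ℕ} (M : HMS α n) :
    ∀ (φ : Form α n), φ.ImpFree → ∀ s, ¬((M.satp φ s).1 ∧ (M.satp φ s).2) := by
  intro φ
  induction φ with
  | top => intro _ s h; exact h.2
  | prim p => intro _ s h; simp [HMS.satp] at h; rw [h.1] at h; simp at h
  | neg φ ih => intro hf s h; exact ih hf s ⟨h.2, h.1⟩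
  | and φ ψ ihφ ihψ =>
      intro hf s h
      obtain ⟨⟨h1, h2⟩, h3⟩ := h
      rcases h3 with ⟨a, _⟩ | ⟨_, b⟩ | ⟨a, _⟩
      · exact ihφ hf.1 s ⟨h1, a⟩
      · exact ihψ hf.2 s ⟨h2, b⟩
      · exact ihφ hf.1 s ⟨h1, a⟩
  | imp φ ψ _ _ => intro hf; exact hf.elim
  | know i φ ih => intro hf s h; exact h.2.2 h.1

lemma defined_iff {α : Type} {n : ℕ} (M : HMS α n) :
    ∀ (φ : Form α n), φ.ImpFree → ∀ s, M.Defined s φ ↔ φ.prims ⊆ M.space s := by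
  intro φ
  induction φ with
  | top =>
      intro _ s
      simp [HMS.Defined, HMS.Sat, HMS.SatN, HMS.satp, Form.prims]
  | prim p =>
      intro _ s
      have := M.pi_def s p
      constructor
      · rintro (h | h) <;> simp [HMS.Sat, HMS.SatN, HMS.satp, Form.prims] at h ⊢ <;>
          exact this.mp (by rw [h]; rfl)
      · intro h
        have hmem : p ∈ M.space s := h (Set.mem_singleton p)
        have hs := this.mpr hmem
        rcases Option.isSome_iff_exists.mp hs with ⟨b, hb⟩
        cases b
        · right; exact hb
        · left; exact hb
  | neg φ ih =>
      intro hf s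
      have := ih hf s
      simp [HMS.Defined, HMS.Sat, HMS.SatN, HMS.satp, Form.prims] at this ⊢
      rw [← this]; tauto
  | and φ ψ ihφ ihψ =>
      intro hf s
      have h1 := ihφ hf.1 s
      have h2 := ihψ hf.2 s
      simp only [HMS.Defined, HMS.Sat, HMS.SatN, HMS.satp, Form.prims,
        Set.union_subset_iff] at h1 h2 ⊢
      rw [← h1, ← h2]; tauto
  | imp φ ψ _ _ => intro hf; exact hf.elim
  | know i φ ih =>
      intro hf s
      have := ih hf s
      simp only [HMS.Defined, HMS.Sat, HMS.SatN, HMS.satp, Form.prims] at this ⊢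
      rw [← this]; tauto

lemma eqHalf_true_iff {α : Type} {n : ℕ} (M : HMS α n) (φ : Form α n)
    (hφ : φ.ImpFree) (s : M.State) :
    M.Sat s (eqHalf φ) ↔ ¬ M.Defined s φ := by
  have hnb := notboth M φ hφ s
  simp only [HMS.Sat, HMS.SatN, HMS.Defined, eqHalf, HMS.satp] at *
  tauto

lemma eqHalf_defined {α : Type} {n : ℕ} (M : HMS α n) (φ : Form α n) (s : M.State) :
    M.Defined s (eqHalf φ) := by
  simp only [HMS.Defined, HMS.Sat, HMS.SatN, eqHalf, HMS.satp]
  tauto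

/-- Axiom Conf1, `(φ = 1/2) ↪ K_i(φ = 1/2)` for `φ ∈ L^K_n(Φ)`, is strongly valid
in all HMS structures satisfying confinedness. -/
theorem Conf1_strongly_valid {α : Type} {n : ℕ} (M : HMS α n) (hconf : M.Confined)
    (i : Fin n) (φ : Form α n) (hφ : φ.ImpFree) (s : M.State) :
    M.Sat s (.imp (eqHalf φ) (.know i (eqHalf φ))) := by
  have hdef := eqHalf_defined M φ s
  by_cases h : M.Sat s (eqHalf φ)
  · -- φ undefined at s, so undefined at all t ∈ k i s
    have hundef : ¬ M.Defined s φ := (eqHalf_true_iff M φ hφ s).mp h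
    have hprim : ¬ φ.prims ⊆ M.space s := fun hc => hundef ((defined_iff M φ hφ s).mpr hc)
    obtain ⟨Ψ', hΨ'sub, hΨ'⟩ := hconf i s
    have hall : ∀ t ∈ M.k i s, M.Sat t (eqHalf φ) := by
      intro t ht
      refine (eqHalf_true_iff M φ hφ t).mpr ?_
      intro hd
      have := (defined_iff M φ hφ t).mp hd
      rw [hΨ' t ht] at this
      exact hprim (this.trans hΨ'sub)
    show (M.satp (.imp (eqHalf φ) (.know i (eqHalf φ))) s).1
    left
    exact ⟨h, hdef, hall⟩
  · -- eqHalf is false at s; know is defined at s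
    have hfalse : M.SatN s (eqHalf φ) := hdef.resolve_left h
    show (M.satp (.imp (eqHalf φ) (.know i (eqHalf φ))) s).1
    right; right
    refine ⟨hfalse, ?_⟩
    by_cases hk : (M.satp (.know i (eqHalf φ)) s).1
    · exact Or.inl hk
    · exact Or.inr ⟨hdef, hk⟩
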